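/- arXiv:0901.2710 — 4 statements merged into one kernel-verified Lean document; each statement's English description precedes it below -/
import Mathlib

section
/- Let σ : A → M_n(A) be an algebra homomorphism with entries σ_ij, and let A^n_σ be the free left A-module with basis ω₁, …, ω_n and right A-action determined by ω_i·a = Σ_j σ_ij(a) ω_j. Then there exists an algebra homomorphism σ̄ : A → M_n(A) such that σᵀ • σ̄ = 𝕀 = σ̄ • σᵀ (in M_n(End_k(A))) if and only if ω₁, …, ω_n is also a basis of A^n_σ as a right A-module. -/
/-!
# Statement 5

Let `σ : A → M_n(A)` be an algebra homomorphism and let `A^n_σ` be the free left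
`A`-module with basis `ω₁, …, ω_n` and right `A`-action `ω_i · a = Σ_j σ_ij(a) ω_j`.
Then there exists an algebra homomorphism `σ̄ : A → M_n(A)` with
`σᵀ • σ̄ = 𝕀 = σ̄ • σᵀ` (in `M_n(End_k(A))`) if and only if `ω₁, …, ω_n` is also a
basis of `A^n_σ` as a right `A`-module.

Identifying `A^n_σ` with `Fin n → A` via left coordinates (`x = Σ_i x_i ω_i`), one
has `(Σ_i ω_i a_i)_j = Σ_i σ_ij(a_i)`; the statement that `ω` is a right basis
(every element has a unique representation `Σ_i ω_i a_i`) is the bijectivity of the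
map `(a_i)_i ↦ (Σ_i σ_ij(a_i))_j`.
-/

namespace Stmt5

variable {k A : Type*} [Field k] [Ring A] [Algebra k A] {n : ℕ}

/--
For an algebra map `σ : A → M_n(A)` (entries `σ_ij a = σ a i j`),
there exists an algebra map `σ̄ : A → M_n(A)` such that
`σᵀ • σ̄ = 𝕀 = σ̄ • σᵀ` in `M_n(End_k A)`, i.e.
`Σ_l σ_li(σ̄_lj(a)) = δ_ij a` and `Σ_l σ̄_il(σ_jl(a)) = δ_ij a`,
if and only if `ω₁, …, ω_n` is a basis of `A^n_σ` as a right `A`-module, i.e. the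
map `(a_i)_i ↦ Σ_i ω_i · a_i = (Σ_i σ_ij(a_i))_j` is bijective.
-/
theorem exists_sigmaBar_iff_rightBasis (σ : A →ₐ[k] Matrix (Fin n) (Fin n) A) :
    (∃ σbar : A →ₐ[k] Matrix (Fin n) (Fin n) A,
      (∀ (i j : Fin n) (a : A),
        (∑ l, σ (σbar a l j) l i) = if i = j then a else 0) ∧
      (∀ (i j : Fin n) (a : A),
        (∑ l, σbar (σ a j l) i l) = if i = j then a else 0)) ↔
    Function.Bijective (fun (v : Fin n → A) (j : Fin n) => ∑ i, σ (v i) i j) := by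
  constructor
  · rintro ⟨σbar, h1, h2⟩
    rw [Function.bijective_iff_has_inverse]
    refine ⟨fun v i => ∑ j, σbar (v j) i j, ?_, ?_⟩
    · intro v
      funext i
      calc ∑ j, σbar (∑ m, σ (v m) m j) i j
          = ∑ j, ∑ m, σbar (σ (v m) m j) i j := by
            refine Finset.sum_congr rfl fun j _ => ?_
            simp [map_sum, Finset.sum_apply, Matrix.sum_apply]
        _ = ∑ m, ∑ j, σbar (σ (v m) m j) i j := Finset.sum_comm
        _ = ∑ m, if i = m then v m else 0 :=
            Finset.sum_congr rfl fun m _ => h2 i m (v m)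
        _ = v i := by simp
    · intro v
      funext j
      calc ∑ i, σ (∑ l, σbar (v l) i l) i j
          = ∑ i, ∑ l, σ (σbar (v l) i l) i j := by
            refine Finset.sum_congr rfl fun i _ => ?_
            simp [map_sum, Finset.sum_apply, Matrix.sum_apply]
        _ = ∑ l, ∑ i, σ (σbar (v l) i l) i j := Finset.sum_comm
        _ = ∑ l, if j = l then v l else 0 :=
            Finset.sum_congr rfl fun l _ => h1 j l (v l)
        _ = v j := by simp
  · intro hbij
    set T : (Fin n → A) → (Fin n → A) := fun v j => ∑ i, σ (v i) i j with hTdef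
    have hinj : Function.Injective T := hbij.injective
    let e : (Fin n → A) ≃ (Fin n → A) := Equiv.ofBijective T hbij
    let c : A → Fin n → Fin n → A := fun a l => e.symm (fun j => if j = l then a else 0)
    have hc : ∀ a l, T (c a l) = fun j => if j = l then a else 0 := fun a l =>
      e.apply_symm_apply _
    have hTc : ∀ (x : A) (l m : Fin n), (∑ i, σ (c x l i) i m) = if m = l then x else 0 :=
      fun x l m => congrFun (hc x l) m
    -- diagonal inputs
    have hdiag : ∀ (x : A), (∀ i j : Fin n, σ x i j = if i = j then x else 0) →
        ∀ l, c x l = fun i => if i = l then x else 0 := by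
      intro x hx l
      apply hinj
      rw [hc]
      funext j
      show (if j = l then x else 0) = ∑ i, σ (if i = l then x else 0) i j
      refine Eq.symm ?_
      have : ∀ i : Fin n, σ (if i = l then x else 0) i j =
          if i = l then (if i = j then x else 0) else 0 := by
        intro i
        by_cases h : i = l <;> simp [h, hx]
      simp only [this]
      rw [Finset.sum_ite_eq' Finset.univ l fun i => if i = j then x else 0]
      simp [eq_comm]
    have hone : ∀ l, c 1 l = fun i => if i = l then (1 : A) else 0 := by
      refine hdiag 1 ?_
      intro i j
      simp [Matrix.one_apply]
    have halg : ∀ (r : k) (l : Fin n),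
        c (algebraMap k A r) l = fun i => if i = l then algebraMap k A r else 0 := by
      intro r
      refine hdiag _ ?_
      intro i j
      rw [σ.commutes]
      simp [Matrix.algebraMap_matrix_apply]
    have hzero : ∀ l, c 0 l = 0 := by
      intro l
      apply hinj
      rw [hc]
      funext j
      show (if j = l then (0:A) else 0) = ∑ i, σ ((0 : Fin n → A) i) i j
      simp
    have hadd : ∀ (a b : A) (l : Fin n), c (a + b) l = c a l + c b l := by
      intro a b l
      apply hinj
      rw [hc]
      funext j
      show (if j = l then a + b else 0) = ∑ i, σ ((c a l + c b l) i) i j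
      have : ∀ i : Fin n, σ ((c a l + c b l) i) i j = σ (c a l i) i j + σ (c b l i) i j := by
        intro i; simp [map_add]
      simp only [this]
      rw [Finset.sum_add_distrib, hTc, hTc]
      by_cases h : j = l <;> simp [h]
    have hmul : ∀ (a b : A) (l : Fin n),
        c (a * b) l = fun i => ∑ m, c a m i * c b l m := by
      intro a b l
      apply hinj
      rw [hc]
      funext j
      show (if j = l then a * b else 0) = ∑ i, σ (∑ m, c a m i * c b l m) i j
      calc (if j = l then a * b else 0)
          = a * (if j = l then b else 0) := by by_cases h : j = l <;> simp [h]
        _ = a * ∑ m, σ (c b l m) m j := by rw [hTc]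
        _ = ∑ m, a * σ (c b l m) m j := Finset.mul_sum _ _ _
        _ = ∑ m, ∑ p, (if p = m then a else 0) * σ (c b l m) p j := by
            refine Finset.sum_congr rfl fun m _ => Eq.symm ?_
            simp [ite_mul]
        _ = ∑ m, ∑ p, (∑ i, σ (c a m i) i p) * σ (c b l m) p j := by
            refine Finset.sum_congr rfl fun m _ => Finset.sum_congr rfl fun p _ => ?_
            rw [hTc]
        _ = ∑ m, ∑ p, ∑ i, σ (c a m i) i p * σ (c b l m) p j := by
            refine Finset.sum_congr rfl fun m _ => Finset.sum_congr rfl fun p _ => ?_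
            rw [Finset.sum_mul]
        _ = ∑ m, ∑ i, ∑ p, σ (c a m i) i p * σ (c b l m) p j := by
            refine Finset.sum_congr rfl fun m _ => Finset.sum_comm
        _ = ∑ i, ∑ m, ∑ p, σ (c a m i) i p * σ (c b l m) p j := Finset.sum_comm
        _ = ∑ i, σ (∑ m, c a m i * c b l m) i j := by
            refine Finset.sum_congr rfl fun i _ => ?_
            rw [map_sum]
            simp only [Finset.sum_apply, Matrix.sum_apply]
            refine Finset.sum_congr rfl fun m _ => ?_
            rw [map_mul, Matrix.mul_apply]
    let σbar : A →ₐ[k] Matrix (Fin n) (Fin n) A :=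
      { toFun := fun a => Matrix.of fun i l => c a l i
        map_one' := by
          ext i l
          simp only [Matrix.of_apply, hone]
          simp [Matrix.one_apply]
        map_mul' := by
          intro a b
          ext i l
          simp only [Matrix.of_apply, hmul, Matrix.mul_apply]
        map_zero' := by
          ext i l
          simp [Matrix.of_apply, hzero]
        map_add' := by
          intro a b
          ext i l
          simp [Matrix.of_apply, hadd]
        commutes' := by
          intro r
          ext i l
          simp only [Matrix.of_apply, halg]
          simp [Matrix.algebraMap_matrix_apply] }
    refine ⟨σbar, ?_, ?_⟩
    · intro i j a
      exact hTc a j i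
    · intro i j a
      have key : T (fun i => ∑ l, c (σ a j l) l i) = T (fun i => if i = j then a else 0) := by
        funext m
        show (∑ i, σ (∑ l, c (σ a j l) l i) i m) = ∑ i, σ (if i = j then a else 0) i m
        calc (∑ i, σ (∑ l, c (σ a j l) l i) i m)
            = ∑ i, ∑ l, σ (c (σ a j l) l i) i m := by
              refine Finset.sum_congr rfl fun i _ => ?_
              rw [map_sum]
              simp [Finset.sum_apply, Matrix.sum_apply]
          _ = ∑ l, ∑ i, σ (c (σ a j l) l i) i m := Finset.sum_comm
          _ = ∑ l, if m = l then σ a j l else 0 :=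
              Finset.sum_congr rfl fun l _ => hTc (σ a j l) l m
          _ = σ a j m := by simp
          _ = ∑ i, σ (if i = j then a else 0) i m := by
              have : ∀ i : Fin n, σ (if i = j then a else 0) i m =
                  if i = j then σ a i m else 0 := by
                intro i; by_cases h : i = j <;> simp [h]
              simp only [this]
              rw [Finset.sum_ite_eq' Finset.univ j fun i => σ a i m]
              simp
      have := congrFun (hinj key) i
      exact this
end Stmt5
end

section
/- Let (∂, σ) be a right twisted multi-derivation on A such that σ, viewed in M_n(End_k(A)), is upper-triangular (σ_ij = 0 for i > j) with non-zero diagonal entries. Then (∂, σ) is a free right twisted multi-derivation with σ̄ lower-triangular if and only if all diagonal entries σ_ii (i = 1, …, n) are invertible in End_k(A). -/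
/-!
# Statement 6

Let `(del, σ)` be a right twisted multi-derivation on `A` with `σ` upper-triangular
(in `M_n(End_k A)`) and with non-zero diagonal entries.  Then `(del, σ)` is a free
right twisted multi-derivation with `σ̄` lower-triangular if and only if all the
diagonal entries `σ_ii` are invertible in `End_k(A)` (i.e. bijective).
-/

namespace Stmt6

variable {k A : Type*} [Field k] [Ring A] [Algebra k A] {n : ℕ}

section Tri

variable {R : Type*} [Ring R]

lemma strict_pow_entry (N : Matrix (Fin n) (Fin n) R)
    (h : ∀ i j : Fin n, (i : ℕ) ≤ j → N i j = 0) :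
    ∀ (m : ℕ) (i j : Fin n), (i : ℕ) < (j : ℕ) + m → (N ^ m) i j = 0 := by
  intro m
  induction m with
  | zero =>
    intro i j hij
    rw [pow_zero]
    exact Matrix.one_apply_ne (by rintro rfl; omega)
  | succ m ih =>
    intro i j hij
    rw [pow_succ, Matrix.mul_apply]
    refine Finset.sum_eq_zero fun l _ => ?_
    by_cases hl : (j : ℕ) < (l : ℕ)
    · rw [ih i l (by omega), zero_mul]
    · rw [h l j (by omega), mul_zero]

lemma strict_pow_entry' (N : Matrix (Fin n) (Fin n) R)
    (h : ∀ i j : Fin n, (j : ℕ) ≤ i → N i j = 0) :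
    ∀ (m : ℕ) (i j : Fin n), (j : ℕ) < (i : ℕ) + m → (N ^ m) i j = 0 := by
  intro m
  induction m with
  | zero =>
    intro i j hij
    rw [pow_zero]
    exact Matrix.one_apply_ne (by rintro rfl; omega)
  | succ m ih =>
    intro i j hij
    rw [pow_succ, Matrix.mul_apply]
    refine Finset.sum_eq_zero fun l _ => ?_
    by_cases hl : (l : ℕ) < (j : ℕ)
    · rw [ih i l (by omega), zero_mul]
    · rw [h l j (by omega), mul_zero]

lemma exists_tri_inv (S : Matrix (Fin n) (Fin n) R)
    (hlow : ∀ i j : Fin n, i < j → S i j = 0)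
    (hd : ∀ i, IsUnit (S i i)) :
    ∃ T : Matrix (Fin n) (Fin n) R,
      (∀ i j : Fin n, i < j → T i j = 0) ∧ T * S = 1 ∧ S * T = 1 := by
  classical
  set D : Matrix (Fin n) (Fin n) R := Matrix.diagonal fun i => S i i with hD
  set D' : Matrix (Fin n) (Fin n) R :=
    Matrix.diagonal fun i => (((hd i).unit⁻¹ : Rˣ) : R) with hD'
  have hDD' : D * D' = 1 := by
    rw [hD, hD', Matrix.diagonal_mul_diagonal]
    ext i j
    rcases eq_or_ne i j with rfl | hij
    · simp [(hd i).mul_val_inv]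
    · simp [Matrix.diagonal_apply_ne _ hij, Matrix.one_apply_ne hij]
  have hD'D : D' * D = 1 := by
    rw [hD, hD', Matrix.diagonal_mul_diagonal]
    ext i j
    rcases eq_or_ne i j with rfl | hij
    · simp [(hd i).val_inv_mul]
    · simp [Matrix.diagonal_apply_ne _ hij, Matrix.one_apply_ne hij]
  set N' : Matrix (Fin n) (Fin n) R := (S - D) * D' with hN'
  have hNs : ∀ i j : Fin n, (i : ℕ) ≤ (j : ℕ) → (-N') i j = 0 := by
    intro i j hij
    have h0 : (S - D) i j = 0 := by
      rcases eq_or_lt_of_le hij with heq | hlt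
      · have : i = j := Fin.ext heq
        subst this
        simp [hD, Matrix.sub_apply, Matrix.diagonal_apply_eq]
      · have hlt' : i < j := by rwa [Fin.lt_def]
        simp [hD, Matrix.sub_apply, hlow i j hlt',
          Matrix.diagonal_apply_ne _ (Fin.ne_of_lt hlt')]
    rw [Matrix.neg_apply, hN', Matrix.mul_diagonal, h0, zero_mul, neg_zero]
  have hN's : ∀ i j : Fin n, (i : ℕ) ≤ (j : ℕ) → N' i j = 0 := by
    intro i j hij
    have := hNs i j hij
    rw [Matrix.neg_apply, neg_eq_zero] at this
    exact this
  have hfact : S = (1 + N') * D := by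
    have h1 : N' * D = S - D := by
      rw [hN', mul_assoc, hD'D, mul_one]
    rw [add_mul, one_mul, h1]
    abel
  set U : Matrix (Fin n) (Fin n) R := ∑ m ∈ Finset.range n, (-N') ^ m with hU
  have hNn : (-N') ^ n = 0 := by
    ext i j
    rw [strict_pow_entry (-N') hNs n i j (by omega), Matrix.zero_apply]
  have hU1 : U * (1 + N') = 1 := by
    have h := geom_sum_mul (-N') n
    rw [hNn, zero_sub] at h
    have e : -N' - 1 = -(1 + N') := by abel
    rw [e, mul_neg, neg_inj] at h
    exact h
  have hU2 : (1 + N') * U = 1 := by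
    have h := mul_geom_sum (-N') n
    rw [hNn, zero_sub] at h
    have e : -N' - 1 = -(1 + N') := by abel
    rw [e, neg_mul, neg_inj] at h
    exact h
  refine ⟨D' * U, ?_, ?_, ?_⟩
  · intro i j hij
    have hUij : U i j = 0 := by
      rw [hU, Matrix.sum_apply]
      refine Finset.sum_eq_zero fun m _ => ?_
      exact strict_pow_entry (-N') hNs m i j (by rw [Fin.lt_def] at hij; omega)
    rw [hD', Matrix.diagonal_mul, hUij, mul_zero]
  · calc D' * U * S = D' * U * ((1 + N') * D) := by rw [← hfact]
      _ = D' * (U * (1 + N')) * D := by simp only [mul_assoc]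
      _ = 1 := by rw [hU1, mul_one, hD'D]
  · calc S * (D' * U) = (1 + N') * D * (D' * U) := by rw [← hfact]
      _ = (1 + N') * (D * D') * U := by simp only [mul_assoc]
      _ = 1 := by rw [hDD', mul_one, hU2]

lemma exists_tri_inv' (S : Matrix (Fin n) (Fin n) R)
    (hupp : ∀ i j : Fin n, j < i → S i j = 0)
    (hd : ∀ i, IsUnit (S i i)) :
    ∃ T : Matrix (Fin n) (Fin n) R,
      (∀ i j : Fin n, j < i → T i j = 0) ∧ T * S = 1 ∧ S * T = 1 := by
  classical
  set D : Matrix (Fin n) (Fin n) R := Matrix.diagonal fun i => S i i with hD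
  set D' : Matrix (Fin n) (Fin n) R :=
    Matrix.diagonal fun i => (((hd i).unit⁻¹ : Rˣ) : R) with hD'
  have hDD' : D * D' = 1 := by
    rw [hD, hD', Matrix.diagonal_mul_diagonal]
    ext i j
    rcases eq_or_ne i j with rfl | hij
    · simp [(hd i).mul_val_inv]
    · simp [Matrix.diagonal_apply_ne _ hij, Matrix.one_apply_ne hij]
  have hD'D : D' * D = 1 := by
    rw [hD, hD', Matrix.diagonal_mul_diagonal]
    ext i j
    rcases eq_or_ne i j with rfl | hij
    · simp [(hd i).val_inv_mul]
    · simp [Matrix.diagonal_apply_ne _ hij, Matrix.one_apply_ne hij]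
  set N' : Matrix (Fin n) (Fin n) R := (S - D) * D' with hN'
  have hNs : ∀ i j : Fin n, (j : ℕ) ≤ (i : ℕ) → (-N') i j = 0 := by
    intro i j hij
    have h0 : (S - D) i j = 0 := by
      rcases eq_or_lt_of_le hij with heq | hlt
      · have : i = j := Fin.ext heq.symm
        subst this
        simp [hD, Matrix.sub_apply, Matrix.diagonal_apply_eq]
      · have hlt' : j < i := by rwa [Fin.lt_def]
        simp [hD, Matrix.sub_apply, hupp i j hlt',
          Matrix.diagonal_apply_ne _ (Fin.ne_of_lt hlt').symm]
    rw [Matrix.neg_apply, hN', Matrix.mul_diagonal, h0, zero_mul, neg_zero]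
  have hfact : S = (1 + N') * D := by
    have h1 : N' * D = S - D := by
      rw [hN', mul_assoc, hD'D, mul_one]
    rw [add_mul, one_mul, h1]
    abel
  set U : Matrix (Fin n) (Fin n) R := ∑ m ∈ Finset.range n, (-N') ^ m with hU
  have hNn : (-N') ^ n = 0 := by
    ext i j
    rw [strict_pow_entry' (-N') hNs n i j (by omega), Matrix.zero_apply]
  have hU1 : U * (1 + N') = 1 := by
    have h := geom_sum_mul (-N') n
    rw [hNn, zero_sub] at h
    have e : -N' - 1 = -(1 + N') := by abel
    rw [e, mul_neg, neg_inj] at h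
    exact h
  have hU2 : (1 + N') * U = 1 := by
    have h := mul_geom_sum (-N') n
    rw [hNn, zero_sub] at h
    have e : -N' - 1 = -(1 + N') := by abel
    rw [e, neg_mul, neg_inj] at h
    exact h
  refine ⟨D' * U, ?_, ?_, ?_⟩
  · intro i j hij
    have hUij : U i j = 0 := by
      rw [hU, Matrix.sum_apply]
      refine Finset.sum_eq_zero fun m _ => ?_
      exact strict_pow_entry' (-N') hNs m i j (by rw [Fin.lt_def] at hij; omega)
    rw [hD', Matrix.diagonal_mul, hUij, mul_zero]
  · calc D' * U * S = D' * U * ((1 + N') * D) := by rw [← hfact]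
      _ = D' * (U * (1 + N')) * D := by simp only [mul_assoc]
      _ = 1 := by rw [hU1, mul_one, hD'D]
  · calc S * (D' * U) = (1 + N') * D * (D' * U) := by rw [← hfact]
      _ = (1 + N') * (D * D') * U := by simp only [mul_assoc]
      _ = 1 := by rw [hDD', mul_one, hU2]

end Tri


/-- The `(j,i)` entry of `σ`, as a linear endomorphism (entry of `σᵀ`). -/
def ent (σ : A →ₐ[k] Matrix (Fin n) (Fin n) A) (i j : Fin n) : Module.End k A where
  toFun a := σ a j i
  map_add' a b := by simp
  map_smul' c a := by simp

@[simp] lemma ent_apply (σ : A →ₐ[k] Matrix (Fin n) (Fin n) A) (i j : Fin n) (a : A) :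
    ent σ i j a = σ a j i := rfl

/-- `σᵀ` as a matrix of endomorphisms. -/
def Smat (σ : A →ₐ[k] Matrix (Fin n) (Fin n) A) :
    Matrix (Fin n) (Fin n) (Module.End k A) :=
  Matrix.of fun i j => ent σ i j

@[simp] lemma Smat_apply (σ : A →ₐ[k] Matrix (Fin n) (Fin n) A) (i j : Fin n) :
    Smat σ i j = ent σ i j := rfl


theorem mk_free (τ : A →ₐ[k] Matrix (Fin n) (Fin n) A)
    (T : Matrix (Fin n) (Fin n) (Module.End k A))
    (hTS : T * Smat τ = 1) (hST : Smat τ * T = 1) :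
    ∃ ρ : A →ₐ[k] Matrix (Fin n) (Fin n) A,
      (∀ (i j : Fin n) (a : A), ρ a i j = T i j a) ∧
      (∀ (i j : Fin n) (a : A), (∑ l, ρ (τ a j l) i l) = if i = j then a else 0) ∧
      (∀ (i j : Fin n) (a : A), (∑ l, τ (ρ a l j) l i) = if i = j then a else 0) := by
  classical
  have R1 : ∀ (i q : Fin n) (a : A),
      (∑ j, T i j (τ a q j)) = if i = q then a else 0 := by
    intro i q a
    have h : (T * Smat τ) i q = (1 : Matrix (Fin n) (Fin n) (Module.End k A)) i q := by
      rw [hTS]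
    rw [Matrix.mul_apply] at h
    have h' := LinearMap.congr_fun h a
    rw [LinearMap.sum_apply] at h'
    simp only [Module.End.mul_apply, Smat_apply, ent_apply] at h'
    rwa [Matrix.one_apply, apply_ite (fun f : Module.End k A => f a),
      Module.End.one_apply, LinearMap.zero_apply] at h'
  have R2 : ∀ (p j : Fin n) (a : A),
      (∑ i, τ (T i j a) i p) = if p = j then a else 0 := by
    intro p j a
    have h : (Smat τ * T) p j = (1 : Matrix (Fin n) (Fin n) (Module.End k A)) p j := by
      rw [hST]
    rw [Matrix.mul_apply] at h
    have h' := LinearMap.congr_fun h a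
    rw [LinearMap.sum_apply] at h'
    simp only [Module.End.mul_apply, Smat_apply, ent_apply] at h'
    rwa [Matrix.one_apply, apply_ite (fun f : Module.End k A => f a),
      Module.End.one_apply, LinearMap.zero_apply] at h'
  have Lone : ∀ i q : Fin n, T i q 1 = if i = q then (1 : A) else 0 := by
    intro i q
    have h := R1 i q 1
    rw [map_one] at h
    rw [← h]
    rw [Finset.sum_congr rfl (fun j _ => by
      rw [Matrix.one_apply] :
        ∀ j ∈ Finset.univ, T i j ((1 : Matrix (Fin n) (Fin n) A) q j)
          = T i j (if q = j then 1 else 0))]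
    rw [Finset.sum_congr rfl (fun j _ => by
      split_ifs with hqj
      · rfl
      · rw [map_zero] :
        ∀ j ∈ Finset.univ, T i j (if q = j then (1:A) else 0)
          = if q = j then T i j 1 else 0)]
    rw [Finset.sum_ite_eq]
    simp
  have L1 : ∀ (i q : Fin n) (a c : A),
      (∑ j, T i j (a * τ c q j)) = T i q a * c := by
    intro i q a c
    have key : ∀ p : Fin n, a * τ c q p = ∑ x, τ (T x q a * c) x p := by
      intro p
      have e1 : ∀ x : Fin n, τ (T x q a * c) x p = ∑ m, τ (T x q a) x m * τ c m p := by
        intro x; rw [map_mul, Matrix.mul_apply]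
      rw [Finset.sum_congr rfl (fun x _ => e1 x), Finset.sum_comm]
      rw [Finset.sum_congr rfl (fun m _ => (Finset.sum_mul _ _ _).symm)]
      rw [Finset.sum_congr rfl (fun m _ => by rw [R2 m q a] :
        ∀ m ∈ Finset.univ, (∑ x, τ (T x q a) x m) * τ c m p
          = (if m = q then a else 0) * τ c m p)]
      rw [Finset.sum_congr rfl (fun m _ => by
        split_ifs with h
        · subst h; rfl
        · rw [zero_mul] :
        ∀ m ∈ Finset.univ, (if m = q then a else 0) * τ c m p
          = if m = q then a * τ c q p else 0)]
      rw [Finset.sum_ite_eq']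
      simp
    calc (∑ j, T i j (a * τ c q j))
        = ∑ j, T i j (∑ x, τ (T x q a * c) x j) :=
          Finset.sum_congr rfl fun j _ => by rw [key j]
      _ = ∑ j, ∑ x, T i j (τ (T x q a * c) x j) :=
          Finset.sum_congr rfl fun j _ => map_sum _ _ _
      _ = ∑ x, ∑ j, T i j (τ (T x q a * c) x j) := Finset.sum_comm
      _ = ∑ x, if i = x then T x q a * c else 0 :=
          Finset.sum_congr rfl fun x _ => R1 i x _
      _ = T i q a * c := by
          rw [Finset.sum_ite_eq]
          simp
  have Lmul : ∀ (i m : Fin n) (a b : A),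
      T i m (a * b) = ∑ q, T i q a * T q m b := by
    intro i m a b
    have e1 : (∑ j, T i j (a * (if j = m then b else 0))) = T i m (a * b) := by
      rw [Finset.sum_congr rfl (fun j _ => by
        split_ifs with h
        · subst h; rfl
        · rw [mul_zero, map_zero] :
        ∀ j ∈ Finset.univ, T i j (a * (if j = m then b else 0))
          = if j = m then T i m (a * b) else 0)]
      rw [Finset.sum_ite_eq']
      simp
    have e2 : ∀ j : Fin n, T i j (a * (if j = m then b else 0))
        = ∑ q, T i j (a * τ (T q m b) q j) := by
      intro j
      rw [← R2 j m b, Finset.mul_sum, map_sum]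
    rw [← e1, Finset.sum_congr rfl (fun j _ => e2 j), Finset.sum_comm]
    exact Finset.sum_congr rfl fun q _ => L1 i q a (T q m b)
  refine ⟨AlgHom.ofLinearMap
    { toFun := fun a => Matrix.of fun i j => T i j a
      map_add' := fun a b => by ext i j; simp
      map_smul' := fun c a => by ext i j; simp }
    ?_ ?_, fun i j a => rfl, ?_, ?_⟩
  · ext i j
    simp [Lone i j, Matrix.one_apply]
  · intro a b
    ext i j
    simp [Matrix.mul_apply, Lmul i j a b]
  · intro i j a
    exact R1 i j a
  · intro i j a
    exact R2 i j a




/-- The freeness conditions of Definition 2.1: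
`σ̄ • σᵀ = σᵀ • σ̄ = 𝕀` and `σ̂ • σ̄ᵀ = σ̄ᵀ • σ̂ = 𝕀` in `M_n(End_k A)`. -/
def IsFreePair (σ σbar σhat : A →ₐ[k] Matrix (Fin n) (Fin n) A) : Prop :=
  (∀ (i j : Fin n) (a : A),
      (∑ l, σbar (σ a j l) i l) = if i = j then a else 0) ∧
  (∀ (i j : Fin n) (a : A),
      (∑ l, σ (σbar a l j) l i) = if i = j then a else 0) ∧
  (∀ (i j : Fin n) (a : A),
      (∑ l, σhat (σbar a j l) i l) = if i = j then a else 0) ∧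
  (∀ (i j : Fin n) (a : A),
      (∑ l, σbar (σhat a l j) l i) = if i = j then a else 0)

/--
Let `(del, σ)` be a right twisted multi-derivation
(`del_i(ab) = Σ_j del_j(a) σ_ji(b) + a del_i(b)`) in which `σ` is upper-triangular
(`σ_ij = 0` for `i > j`) with non-zero diagonal entries.  Then `(del, σ)` is free
with `σ̄` lower-triangular if and only if all diagonal entries `σ_ii` are
invertible in `End_k(A)`.
-/
theorem triangular_free_iff
    (σ : A →ₐ[k] Matrix (Fin n) (Fin n) A) (del : Fin n → (A →ₗ[k] A))
    (hder : ∀ (a b : A) (i : Fin n),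
      del i (a * b) = (∑ j, del j a * σ b j i) + a * del i b)
    (htri : ∀ (i j : Fin n), j < i → ∀ a : A, σ a i j = 0)
    (hdiag : ∀ i : Fin n, ∃ a : A, σ a i i ≠ 0) :
    (∃ σbar σhat : A →ₐ[k] Matrix (Fin n) (Fin n) A,
      (∀ (i j : Fin n), i < j → ∀ a : A, σbar a i j = 0) ∧
      IsFreePair σ σbar σhat) ↔
    (∀ i : Fin n, Function.Bijective (fun a : A => σ a i i)) := by
  classical
  constructor
  · rintro ⟨σbar, σhat, hlowbar, h1, h2, h3, h4⟩ i
    have hgf : ∀ a : A, σbar (σ a i i) i i = a := by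
      intro a
      have h := h1 i i a
      rw [Finset.sum_eq_single i] at h
      · simpa using h
      · intro b _ hb
        rcases lt_or_gt_of_ne hb with hb' | hb'
        · rw [htri i b hb', map_zero, Matrix.zero_apply]
        · rw [hlowbar i b hb']
      · simp
    have hfg : ∀ a : A, σ (σbar a i i) i i = a := by
      intro a
      have h := h2 i i a
      rw [Finset.sum_eq_single i] at h
      · simpa using h
      · intro b _ hb
        rcases lt_or_gt_of_ne hb with hb' | hb'
        · rw [hlowbar b i hb', map_zero, Matrix.zero_apply]
        · rw [htri b i hb']
      · simp
    exact ⟨Function.LeftInverse.injective (g := fun a => σbar a i i) (fun a => hgf a),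
      Function.RightInverse.surjective (fun a => hfg a)⟩
  · intro hbij
    have hlowS : ∀ i j : Fin n, i < j → Smat σ i j = 0 := by
      intro i j hij
      refine LinearMap.ext fun a => ?_
      simpa using htri j i hij a
    have hdS : ∀ i, IsUnit (Smat σ i i) :=
      fun i => (Module.End.isUnit_iff _).2 (hbij i)
    obtain ⟨T, hTlow, hTS, hST⟩ := exists_tri_inv (Smat σ) hlowS hdS
    obtain ⟨σbar, hbar_ent, hc1, hc2⟩ := mk_free σ T hTS hST
    have hdiagT : ∀ i : Fin n, IsUnit (T i i) := by
      intro i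
      have e1 : T i i * Smat σ i i = 1 := by
        have h : (T * Smat σ) i i = (1 : Matrix (Fin n) (Fin n) (Module.End k A)) i i := by
          rw [hTS]
        rw [Matrix.mul_apply, Finset.sum_eq_single i] at h
        · rw [h, Matrix.one_apply_eq]
        · intro b _ hb
          rcases lt_or_gt_of_ne hb with hb' | hb'
          · rw [hlowS b i hb', mul_zero]
          · rw [hTlow i b hb', zero_mul]
        · simp
      have e2 : Smat σ i i * T i i = 1 := by
        have h : (Smat σ * T) i i = (1 : Matrix (Fin n) (Fin n) (Module.End k A)) i i := by
          rw [hST]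
        rw [Matrix.mul_apply, Finset.sum_eq_single i] at h
        · rw [h, Matrix.one_apply_eq]
        · intro b _ hb
          rcases lt_or_gt_of_ne hb with hb' | hb'
          · rw [hTlow b i hb', mul_zero]
          · rw [hlowS i b hb', zero_mul]
        · simp
      exact ⟨⟨T i i, Smat σ i i, e1, e2⟩, rfl⟩
    have hSbar_eq : ∀ i j : Fin n, Smat σbar i j = T j i := by
      intro i j
      refine LinearMap.ext fun a => ?_
      simpa using hbar_ent j i a
    have hupS : ∀ i j : Fin n, j < i → Smat σbar i j = 0 := by
      intro i j h
      rw [hSbar_eq]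
      exact hTlow j i h
    have hdS2 : ∀ i, IsUnit (Smat σbar i i) := by
      intro i
      rw [hSbar_eq]
      exact hdiagT i
    obtain ⟨T2, _, hT2S, hST2⟩ := exists_tri_inv' (Smat σbar) hupS hdS2
    obtain ⟨σhat, hhat_ent, hc3, hc4⟩ := mk_free σbar T2 hT2S hST2
    refine ⟨σbar, σhat, ?_, hc1, hc2, hc3, hc4⟩
    intro i j h a
    rw [hbar_ent, hTlow i j h, LinearMap.zero_apply]


end Stmt6
end

section
/- Let (∂, σ; σ̄, σ̂) be a free right twisted multi-derivation on A and let Ω¹(A) = A^n_σ be the associated first order differential calculus with left A-basis ω₁, …, ω_n and d(a) = Σ_i ∂_i(a) ω_i. Let ξ_i : Ω¹(A) → A be the right A-module maps determined by ξ_i(ω_j) = δ_ij. Then there exists a unique hom-connection ∇ : Hom_A(Ω¹(A), A) → A such that ∇(ξ_i) = 0 for all i = 1, …, n; explicitly, ∇(f) = Σ_i ∂_i^σ(f(ω_i)), where ∂_i^σ = Σ_{j,k} σ̄_kj ∘ ∂_j ∘ σ̂_ki. -/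
/-!
# Statement 7

Let `(∂, σ; σ̄, σ̂)` be a free right twisted multi-derivation on `A` and let
`Ω¹(A) = A^n_σ` be the associated first order differential calculus: the free left
`A`-module `Fin n → A` with left basis `ω_i` (the standard basis vectors), right
`A`-action `x · a = (Σ_j x_j σ_ji(a))_i` and `d(a) = (∂_i a)_i = Σ_i ∂_i(a) ω_i`.
Let `ξ_i ∈ Hom_A(Ω¹(A), A)` be the right `A`-linear maps with `ξ_i(ω_j) = δ_ij`.
Then there is a unique hom-connection `∇ : Hom_A(Ω¹(A), A) → A` with `∇(ξ_i) = 0`,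
explicitly `∇(f) = Σ_i ∂_i^σ (f ω_i)` with `∂_i^σ = Σ_{j,l} σ̄_lj ∘ ∂_j ∘ σ̂_li`.

Right `A`-linear maps `Ω¹(A) → A` are modelled as `k`-linear maps satisfying
`f(x · a) = f(x) a`; they form a `k`-submodule `homD` of `(Fin n → A) →ₗ[k] A`.
-/

namespace Stmt7

variable {k A : Type*} [Field k] [Ring A] [Algebra k A] {n : ℕ}

/-- The freeness conditions for `(σ, σ̄, σ̂)`. -/
def IsFreePair (σ σbar σhat : A →ₐ[k] Matrix (Fin n) (Fin n) A) : Prop :=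
  (∀ (i j : Fin n) (a : A),
      (∑ l, σbar (σ a j l) i l) = if i = j then a else 0) ∧
  (∀ (i j : Fin n) (a : A),
      (∑ l, σ (σbar a l j) l i) = if i = j then a else 0) ∧
  (∀ (i j : Fin n) (a : A),
      (∑ l, σhat (σbar a j l) i l) = if i = j then a else 0) ∧
  (∀ (i j : Fin n) (a : A),
      (∑ l, σbar (σhat a l j) l i) = if i = j then a else 0)

variable (σ : A →ₐ[k] Matrix (Fin n) (Fin n) A)

/-- The right `A`-action on `Ω¹(A) = A^n_σ` (in left coordinates):
`(x · a)_i = Σ_j x_j σ_ji(a)`. -/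
def ract (x : Fin n → A) (a : A) : Fin n → A := fun i => ∑ j, x j * σ a j i

/-- Left multiplication on `Ω¹(A) = A^n_σ` (coordinatewise), as a `k`-linear map. -/
def lmulPi (a : A) : (Fin n → A) →ₗ[k] (Fin n → A) where
  toFun x := fun i => a * x i
  map_add' x y := by funext i; simp [mul_add]
  map_smul' c x := by funext i; simp [mul_smul_comm]

/-- `Hom_A(Ω¹(A), A)`: the `k`-submodule of `(Fin n → A) →ₗ[k] A` consisting of the
right `A`-linear maps. -/
def homD : Submodule k ((Fin n → A) →ₗ[k] A) where
  carrier := {f | ∀ (x : Fin n → A) (a : A), f (ract σ x a) = f x * a}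
  add_mem' {f g} hf hg := by
    intro x a
    simp only [LinearMap.add_apply, hf x a, hg x a, add_mul]
  zero_mem' := by intro x a; simp
  smul_mem' c f hf := by
    intro x a
    simp only [LinearMap.smul_apply, hf x a, smul_mul_assoc]

/-- The left basis `ω_i` of `Ω¹(A)`. -/
def om (i : Fin n) : Fin n → A := Pi.single i 1

lemma ract_lmulPi (a c : A) (x : Fin n → A) :
    ract σ (lmulPi (k := k) a x) c = lmulPi (k := k) a (ract σ x c) := by
  funext i
  simp [ract, lmulPi, Finset.mul_sum, mul_assoc]

/-- The right action of `a : A` on `f ∈ Hom_A(Ω¹(A), A)`: `(f·a)(x) = f(a • x)`. -/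
def rAct (f : homD σ) (a : A) : homD σ :=
  ⟨f.1 ∘ₗ lmulPi a, by
    intro x c
    simp only [LinearMap.comp_apply]
    rw [← ract_lmulPi, f.2 _ c]⟩

/-- `d : A → Ω¹(A)` in coordinates: `d a = (∂_i a)_i`. -/
def dvec (del : Fin n → (A →ₗ[k] A)) (a : A) : Fin n → A := fun i => del i a

/-- The maps `∂_i^σ = Σ_{j,l} σ̄_lj ∘ ∂_j ∘ σ̂_li`. -/
def delSigma (σbar σhat : A →ₐ[k] Matrix (Fin n) (Fin n) A)
    (del : Fin n → (A →ₗ[k] A)) (i : Fin n) (a : A) : A :=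
  ∑ j, ∑ l, σbar (del j (σhat a l i)) l j

/-- The hom-connection property together with vanishing on the dual basis. -/
def IsHomConnVanishing (del : Fin n → (A →ₗ[k] A)) (ξ : Fin n → homD σ)
    (nabla : homD σ →ₗ[k] A) : Prop :=
  (∀ (f : homD σ) (a : A),
      nabla (rAct σ f a) = nabla f * a + f.1 (dvec del a)) ∧
  (∀ i, nabla (ξ i) = 0)


section Aux

variable (σbar σhat : A →ₐ[k] Matrix (Fin n) (Fin n) A)

lemma x_decomp (x : Fin n → A) : x = ∑ j, lmulPi (k := k) (x j) (om j) := by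
  funext i
  simp [lmulPi, om, Pi.single_apply]

lemma lmul_om
    (h2 : ∀ (i j : Fin n) (a : A), (∑ l, σ (σbar a l j) l i) = if i = j then a else 0)
    (a : A) (j : Fin n) :
    lmulPi (k := k) a (om j) = ∑ l, ract σ (om l) (σbar a l j) := by
  funext i
  simp only [lmulPi, om, ract, LinearMap.coe_mk, AddHom.coe_mk, Finset.sum_apply]
  simp [Pi.single_apply, ite_mul, mul_ite, h2 i j a]

/-- Representation of a right `A`-linear map by its values on the `ω` basis. -/
lemma rep
    (h2 : ∀ (i j : Fin n) (a : A), (∑ l, σ (σbar a l j) l i) = if i = j then a else 0)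
    (g : homD σ) (x : Fin n → A) :
    g.1 x = ∑ j, ∑ l, g.1 (om l) * σbar (x j) l j := by
  conv_lhs => rw [x_decomp (k := k) x, map_sum]
  refine Finset.sum_congr rfl fun j _ => ?_
  rw [lmul_om σ σbar h2, map_sum]
  exact Finset.sum_congr rfl fun l _ => g.2 _ _

lemma del_one (del : Fin n → (A →ₗ[k] A))
    (hder : ∀ (a b : A) (i : Fin n),
      del i (a * b) = (∑ j, del j a * σ b j i) + a * del i b) (i : Fin n) :
    del i (1 : A) = 0 := by
  have h := hder 1 1 i
  simp only [one_mul, map_one, Matrix.one_apply, mul_ite, mul_one, mul_zero,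
    Finset.sum_ite_eq', Finset.mem_univ, if_pos] at h
  exact (right_eq_add.mp h)

/-- The candidate hom-connection. -/
def nabla0 (del : Fin n → (A →ₗ[k] A)) : homD σ →ₗ[k] A where
  toFun f := ∑ i, delSigma σbar σhat del i (f.1 (om i))
  map_add' f g := by
    simp [delSigma, Matrix.add_apply, Finset.sum_add_distrib]
  map_smul' c f := by
    simp [delSigma, Finset.smul_sum, Matrix.smul_apply, map_smul]

/-- Decomposition of `f` in terms of the dual basis `ξ`. -/
lemma f_decomp
    (h2 : ∀ (i j : Fin n) (a : A), (∑ l, σ (σbar a l j) l i) = if i = j then a else 0)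
    (h4 : ∀ (i j : Fin n) (a : A), (∑ l, σbar (σhat a l j) l i) = if i = j then a else 0)
    (ξ : Fin n → homD σ)
    (hξ : ∀ i j, (ξ i).1 (om j) = if i = j then (1 : A) else 0)
    (f : homD σ) :
    f = ∑ i, rAct σ (ξ i) (∑ l, σhat (f.1 (om l)) i l) := by
  set b : Fin n → A := fun i => ∑ l, σhat (f.1 (om l)) i l with hb
  refine Subtype.ext (LinearMap.ext fun x => ?_)
  have hcoe : ((∑ i, rAct σ (ξ i) (b i) : homD σ) : (Fin n → A) →ₗ[k] A) x
      = ∑ i, (ξ i).1 (lmulPi (k := k) (b i) x) := by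
    simp [rAct]
  rw [hcoe]
  symm
  have e1 : ∀ i, (ξ i).1 (lmulPi (k := k) (b i) x)
      = ∑ j, ∑ q, σbar (b i) i q * σbar (x j) q j := by
    intro i
    rw [rep σ σbar h2 (ξ i)]
    refine Finset.sum_congr rfl fun j _ => ?_
    have : ∀ l : Fin n, (ξ i).1 (om l) * σbar ((lmulPi (k := k) (b i) x) j) l j
        = (if i = l then (1:A) else 0) * σbar (b i * x j) l j := by
      intro l; rw [hξ]; rfl
    rw [Finset.sum_congr rfl fun l _ => this l]
    simp [ite_mul, zero_mul, Finset.sum_ite_eq, map_mul, Matrix.mul_apply]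
  rw [Finset.sum_congr rfl fun i _ => e1 i]
  have e2 : ∀ q, (∑ i, σbar (b i) i q) = f.1 (om q) := by
    intro q
    rw [hb]
    simp only [map_sum, Matrix.sum_apply]
    rw [Finset.sum_comm]
    simp [h4, Finset.sum_ite_eq']
  calc ∑ i, ∑ j, ∑ q, σbar (b i) i q * σbar (x j) q j
      = ∑ j, ∑ q, ∑ i, σbar (b i) i q * σbar (x j) q j := by
        rw [Finset.sum_comm]
        exact Finset.sum_congr rfl fun j _ => Finset.sum_comm
    _ = ∑ j, ∑ q, f.1 (om q) * σbar (x j) q j := by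
        refine Finset.sum_congr rfl fun j _ => Finset.sum_congr rfl fun q _ => ?_
        rw [← Finset.sum_mul, e2 q]
    _ = f.1 x := (rep σ σbar h2 f x).symm

/-- Any hom-connection vanishing on `ξ` is given by the explicit formula. -/
lemma nabla_eq_formula
    (h2 : ∀ (i j : Fin n) (a : A), (∑ l, σ (σbar a l j) l i) = if i = j then a else 0)
    (h4 : ∀ (i j : Fin n) (a : A), (∑ l, σbar (σhat a l j) l i) = if i = j then a else 0)
    (del : Fin n → (A →ₗ[k] A))
    (ξ : Fin n → homD σ)
    (hξ : ∀ i j, (ξ i).1 (om j) = if i = j then (1 : A) else 0)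
    (nabla : homD σ →ₗ[k] A)
    (hn : IsHomConnVanishing σ del ξ nabla)
    (f : homD σ) :
    nabla f = ∑ i, delSigma σbar σhat del i (f.1 (om i)) := by
  set b : Fin n → A := fun i => ∑ l, σhat (f.1 (om l)) i l with hb
  conv_lhs => rw [f_decomp σ σbar σhat h2 h4 ξ hξ f, map_sum]
  have e0 : ∀ i, nabla (rAct σ (ξ i) (b i)) = (ξ i).1 (dvec del (b i)) := by
    intro i; rw [hn.1, hn.2 i, zero_mul, zero_add]
  rw [Finset.sum_congr rfl fun i _ => e0 i]
  have e1 : ∀ i, (ξ i).1 (dvec del (b i))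
      = ∑ l, ∑ j, σbar (del j (σhat (f.1 (om l)) i l)) i j := by
    intro i
    rw [rep σ σbar h2 (ξ i)]
    have : ∀ j, (∑ l, (ξ i).1 (om l) * σbar ((dvec del (b i)) j) l j)
        = ∑ l, σbar (del j (σhat (f.1 (om l)) i l)) i j := by
      intro j
      have h : ∀ l : Fin n, (ξ i).1 (om l) * σbar ((dvec del (b i)) j) l j
          = (if i = l then (1:A) else 0) * σbar (del j (b i)) l j := by
        intro l; rw [hξ]; rfl
      rw [Finset.sum_congr rfl fun l _ => h l]
      simp only [ite_mul, zero_mul, one_mul, Finset.sum_ite_eq, Finset.mem_univ, if_pos]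
      rw [hb]
      simp only [map_sum, Matrix.sum_apply]
    rw [Finset.sum_congr rfl fun j _ => this j, Finset.sum_comm]
  rw [Finset.sum_congr rfl fun i _ => e1 i]
  calc ∑ i, ∑ l, ∑ j, σbar (del j (σhat (f.1 (om l)) i l)) i j
      = ∑ l, ∑ j, ∑ i, σbar (del j (σhat (f.1 (om l)) i l)) i j := by
        rw [Finset.sum_comm]
        exact Finset.sum_congr rfl fun l _ => Finset.sum_comm
    _ = ∑ i, delSigma σbar σhat del i (f.1 (om i)) := rfl

lemma delSigma_zero (del : Fin n → (A →ₗ[k] A)) (i : Fin n) :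
    delSigma σbar σhat del i (0 : A) = 0 := by
  simp [delSigma]

lemma delSigma_one (del : Fin n → (A →ₗ[k] A))
    (hone : ∀ j, del j (1 : A) = 0) (i : Fin n) :
    delSigma σbar σhat del i (1 : A) = 0 := by
  simp [delSigma, Matrix.one_apply, apply_ite (del _), hone]

lemma key
    (h1 : ∀ (i j : Fin n) (a : A), (∑ l, σbar (σ a j l) i l) = if i = j then a else 0)
    (h3 : ∀ (i j : Fin n) (a : A), (∑ l, σhat (σbar a j l) i l) = if i = j then a else 0)
    (h4 : ∀ (i j : Fin n) (a : A), (∑ l, σbar (σhat a l j) l i) = if i = j then a else 0)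
    (del : Fin n → (A →ₗ[k] A))
    (hder : ∀ (a b : A) (i : Fin n),
      del i (a * b) = (∑ j, del j a * σ b j i) + a * del i b)
    (aa : Fin n → A) (a : A) :
    ∑ i, delSigma σbar σhat del i (∑ l, aa l * σbar a l i)
      = (∑ i, delSigma σbar σhat del i (aa i)) * a
        + ∑ j, ∑ l, aa l * σbar (del j a) l j := by
  -- Step 1: collapse the `i`-sum inside `σhat`
  have step1 : ∀ p : Fin n,
      (∑ i, σhat (∑ l, aa l * σbar a l i) p i) = (∑ l, σhat (aa l) p l) * a := by
    intro p
    have e : ∀ i : Fin n, σhat (∑ l, aa l * σbar a l i) p i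
        = ∑ l, ∑ q, σhat (aa l) p q * σhat (σbar a l i) q i := by
      intro i
      simp [map_sum, map_mul, Matrix.sum_apply, Matrix.mul_apply]
    rw [Finset.sum_congr rfl fun i _ => e i, Finset.sum_comm, Finset.sum_mul]
    refine Finset.sum_congr rfl fun l _ => ?_
    rw [Finset.sum_comm]
    calc ∑ q, ∑ i, σhat (aa l) p q * σhat (σbar a l i) q i
        = ∑ q, σhat (aa l) p q * ∑ i, σhat (σbar a l i) q i := by
          simp [Finset.mul_sum]
      _ = σhat (aa l) p l * a := by
          simp [h3, mul_ite, mul_zero, Finset.sum_ite_eq']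
  -- Step 2: reorder and use step1
  have step2 : (∑ i, delSigma σbar σhat del i (∑ l, aa l * σbar a l i))
      = ∑ j, ∑ p, ∑ l, σbar (del j (σhat (aa l) p l * a)) p j := by
    unfold delSigma
    rw [Finset.sum_comm]
    refine Finset.sum_congr rfl fun j _ => ?_
    rw [Finset.sum_comm]
    refine Finset.sum_congr rfl fun p _ => ?_
    rw [show (∑ i, σbar (del j (σhat (∑ l, aa l * σbar a l i) p i)) p j)
        = σbar (del j (∑ i, σhat (∑ l, aa l * σbar a l i) p i)) p j by
      simp only [map_sum, Matrix.sum_apply]]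
    rw [step1 p, Finset.sum_mul, map_sum, map_sum, Matrix.sum_apply]
  rw [step2]
  -- Step 3: Leibniz rule and split
  have expand : ∀ (j p l : Fin n), σbar (del j (σhat (aa l) p l * a)) p j
      = (∑ m, ∑ q, σbar (del m (σhat (aa l) p l)) p q * σbar (σ a m j) q j)
        + ∑ q, σbar (σhat (aa l) p l) p q * σbar (del j a) q j := by
    intro j p l
    rw [hder]
    simp [map_add, map_sum, map_mul, Matrix.add_apply, Matrix.sum_apply, Matrix.mul_apply]
  simp only [expand, Finset.sum_add_distrib]
  congr 1
  -- Part 1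
  · calc ∑ j, ∑ p, ∑ l, ∑ m, ∑ q,
          σbar (del m (σhat (aa l) p l)) p q * σbar (σ a m j) q j
        = ∑ p, ∑ l, ∑ m, ∑ q, ∑ j,
          σbar (del m (σhat (aa l) p l)) p q * σbar (σ a m j) q j := by
          rw [Finset.sum_comm]
          refine Finset.sum_congr rfl fun p _ => ?_
          rw [Finset.sum_comm]
          refine Finset.sum_congr rfl fun l _ => ?_
          rw [Finset.sum_comm]
          refine Finset.sum_congr rfl fun m _ => Finset.sum_comm
      _ = ∑ p, ∑ l, ∑ m, σbar (del m (σhat (aa l) p l)) p m * a := by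
          refine Finset.sum_congr rfl fun p _ => Finset.sum_congr rfl fun l _ =>
            Finset.sum_congr rfl fun m _ => ?_
          simp [← Finset.mul_sum, h1, mul_ite, mul_zero, Finset.sum_ite_eq']
      _ = ∑ l, ∑ m, ∑ p, σbar (del m (σhat (aa l) p l)) p m * a := by
          rw [Finset.sum_comm]
          refine Finset.sum_congr rfl fun l _ => Finset.sum_comm
      _ = (∑ i, delSigma σbar σhat del i (aa i)) * a := by
          unfold delSigma
          simp [Finset.sum_mul]
  -- Part 2
  · calc ∑ j, ∑ p, ∑ l, ∑ q, σbar (σhat (aa l) p l) p q * σbar (del j a) q j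
        = ∑ j, ∑ l, ∑ q, ∑ p, σbar (σhat (aa l) p l) p q * σbar (del j a) q j := by
          refine Finset.sum_congr rfl fun j _ => ?_
          rw [Finset.sum_comm]
          refine Finset.sum_congr rfl fun l _ => Finset.sum_comm
      _ = ∑ j, ∑ l, aa l * σbar (del j a) l j := by
          refine Finset.sum_congr rfl fun j _ => Finset.sum_congr rfl fun l _ => ?_
          simp [← Finset.sum_mul, h4, ite_mul, zero_mul, Finset.sum_ite_eq']
      _ = ∑ j, ∑ l, aa l * σbar (del j a) l j := rfl



end Aux

/--
**Theorem 3.4.**  Let `(∂, σ; σ̄, σ̂)` be a free right twisted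
multi-derivation on `A`, `Ω¹(A) = A^n_σ` the associated calculus and
`ξ_i ∈ Hom_A(Ω¹(A), A)` determined by `ξ_i(ω_j) = δ_ij`.  Then there exists a
unique hom-connection `∇` on `A` with `∇(ξ_i) = 0` for all `i`, and it is given
explicitly by `∇(f) = Σ_i ∂_i^σ(f(ω_i))` where `∂_i^σ = Σ_{j,l} σ̄_lj ∘ ∂_j ∘ σ̂_li`.
-/
theorem exists_unique_homConnection
    (σbar σhat : A →ₐ[k] Matrix (Fin n) (Fin n) A)
    (hfree : IsFreePair σ σbar σhat)
    (del : Fin n → (A →ₗ[k] A))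
    (hder : ∀ (a b : A) (i : Fin n),
      del i (a * b) = (∑ j, del j a * σ b j i) + a * del i b)
    (ξ : Fin n → homD σ)
    (hξ : ∀ i j, (ξ i).1 (om j) = if i = j then (1 : A) else 0) :
    (∃! nabla : homD σ →ₗ[k] A, IsHomConnVanishing σ del ξ nabla) ∧
    (∀ nabla : homD σ →ₗ[k] A, IsHomConnVanishing σ del ξ nabla →
      ∀ f : homD σ, nabla f = ∑ i, delSigma σbar σhat del i (f.1 (om i))) := by
  obtain ⟨h1, h2, h3, h4⟩ := hfree
  have hone : ∀ j, del j (1 : A) = 0 := del_one σ del hder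
  have hprop : IsHomConnVanishing σ del ξ (nabla0 σ σbar σhat del) := by
    constructor
    · intro f a
      have hc : ∀ i, (rAct σ f a).1 (om i) = ∑ l, f.1 (om l) * σbar a l i := by
        intro i
        show f.1 (lmulPi (k := k) a (om i)) = _
        rw [lmul_om σ σbar h2, map_sum]
        exact Finset.sum_congr rfl fun l _ => f.2 _ _
      show (∑ i, delSigma σbar σhat del i ((rAct σ f a).1 (om i))) = _
      rw [Finset.sum_congr rfl fun i _ => congrArg (delSigma σbar σhat del i) (hc i)]
      rw [key σ σbar σhat h1 h3 h4 del hder (fun l => f.1 (om l)) a]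
      congr 1
      exact (rep σ σbar h2 f (dvec del a)).symm
    · intro i
      show (∑ j, delSigma σbar σhat del j ((ξ i).1 (om j))) = 0
      rw [Finset.sum_congr rfl fun j _ => congrArg (delSigma σbar σhat del j) (hξ i j)]
      refine Finset.sum_eq_zero fun j _ => ?_
      by_cases h : i = j
      · rw [if_pos h]; exact delSigma_one σbar σhat del hone j
      · rw [if_neg h]; exact delSigma_zero σbar σhat del j
  have hform : ∀ nabla : homD σ →ₗ[k] A, IsHomConnVanishing σ del ξ nabla →
      ∀ f : homD σ, nabla f = ∑ i, delSigma σbar σhat del i (f.1 (om i)) :=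
    fun nabla hn f => nabla_eq_formula σ σbar σhat h2 h4 del ξ hξ nabla hn f
  refine ⟨⟨nabla0 σ σbar σhat del, hprop, ?_⟩, hform⟩
  intro y hy
  refine LinearMap.ext fun f => ?_
  rw [hform y hy f]
  rfl


end Stmt7
end

section
/- Let (∂, σ; σ̄, σ̂) be a free right twisted multi-derivation on A, and let Ω¹ be any first order differential calculus on A that is generated (not necessarily freely) as a left A-module by elements ω₁, …, ω_n satisfying ω_i·a = Σ_j σ_ij(a) ω_j and d(a) = Σ_i ∂_i(a) ω_i for all a ∈ A. Then the formula ∇(f) = Σ_i ∂_i^σ(f(ω_i)), with ∂_i^σ = Σ_{j,k} σ̄_kj ∘ ∂_j ∘ σ̂_ki, defines a hom-connection on A with respect to Ω¹. -/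
/-!
# Statement 8 (Corollary 3.6)

Let `(∂, σ; σ̄, σ̂)` be a free right twisted multi-derivation on `A` and let
`(Ω¹, d)` be *any* first order differential calculus on `A` generated (not
necessarily freely) as a left `A`-module by elements `ω₁, …, ω_n` such that
`ω_i a = Σ_j σ_ij(a) ω_j`, `a ω_i = Σ_j ω_j σ̄_ji(a)` and `d a = Σ_i ∂_i(a) ω_i`.
Then `∇(f) = Σ_i ∂_i^σ(f(ω_i))`, with `∂_i^σ = Σ_{j,l} σ̄_lj ∘ ∂_j ∘ σ̂_li`,
defines a hom-connection on `A` with respect to `Ω¹`.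

Right modules are formalised as left modules over `Aᵐᵒᵖ`.
-/

open MulOpposite

namespace Stmt8

variable {k A : Type*} [Field k] [Ring A] [Algebra k A] {n : ℕ}

/-- The freeness conditions for `(σ, σ̄, σ̂)`. -/
def IsFreePair (σ σbar σhat : A →ₐ[k] Matrix (Fin n) (Fin n) A) : Prop :=
  (∀ (i j : Fin n) (a : A),
      (∑ l, σbar (σ a j l) i l) = if i = j then a else 0) ∧
  (∀ (i j : Fin n) (a : A),
      (∑ l, σ (σbar a l j) l i) = if i = j then a else 0) ∧
  (∀ (i j : Fin n) (a : A),
      (∑ l, σhat (σbar a j l) i l) = if i = j then a else 0) ∧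
  (∀ (i j : Fin n) (a : A),
      (∑ l, σbar (σhat a l j) l i) = if i = j then a else 0)

variable {Ω : Type*} [AddCommGroup Ω] [Module k Ω] [Module A Ω] [Module Aᵐᵒᵖ Ω]
  [SMulCommClass A Aᵐᵒᵖ Ω]

/-- Left multiplication by `a : A` on the bimodule `Ω`, as a right `A`-linear map. -/
def lmul (a : A) : Ω →ₗ[Aᵐᵒᵖ] Ω where
  toFun ω := a • ω
  map_add' := smul_add a
  map_smul' c ω := smul_comm a c ω

/-- The maps `∂_i^σ = Σ_{j,l} σ̄_lj ∘ ∂_j ∘ σ̂_li`. -/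
def delSigma (σbar σhat : A →ₐ[k] Matrix (Fin n) (Fin n) A)
    (del : Fin n → (A →ₗ[k] A)) (i : Fin n) (a : A) : A :=
  ∑ j, ∑ l, σbar (del j (σhat a l i)) l j

section Aux

variable (σ σbar σhat : A →ₐ[k] Matrix (Fin n) (Fin n) A) (del : Fin n → (A →ₗ[k] A))

/-- `delSigma` as a `k`-linear map. -/
def delSigmaL (i : Fin n) : A →ₗ[k] A where
  toFun := delSigma σbar σhat del i
  map_add' a b := by
    simp [delSigma, Matrix.add_apply, Finset.sum_add_distrib]
  map_smul' c a := by
    simp [delSigma, Matrix.smul_apply, Finset.smul_sum]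

theorem key (hfree : IsFreePair σ σbar σhat)
    (hder : ∀ (a b : A) (i : Fin n),
      del i (a * b) = (∑ j, del j a * σ b j i) + a * del i b)
    (x a : A) (j : Fin n) :
    ∑ i, delSigma σbar σhat del i (x * σbar a j i)
      = delSigma σbar σhat del j x * a + x * ∑ i, σbar (del i a) j i := by
  obtain ⟨h1, _h2, h3, h4⟩ := hfree
  have step1 : ∀ l, ∑ i, σhat (x * σbar a j i) l i = σhat x l j * a := by
    intro l
    calc ∑ i, σhat (x * σbar a j i) l i
        = ∑ i, ∑ m, σhat x l m * σhat (σbar a j i) m i := by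
          refine Finset.sum_congr rfl fun i _ => ?_
          rw [map_mul, Matrix.mul_apply]
      _ = ∑ m, σhat x l m * ∑ i, σhat (σbar a j i) m i := by
          rw [Finset.sum_comm]
          simp [Finset.mul_sum]
      _ = σhat x l j * a := by
          simp only [h3, mul_ite, mul_zero]
          simp
  calc ∑ i, delSigma σbar σhat del i (x * σbar a j i)
      = ∑ p, ∑ l, σbar (del p (σhat x l j * a)) l p := by
        unfold delSigma
        rw [Finset.sum_comm]
        refine Finset.sum_congr rfl fun p _ => ?_
        rw [Finset.sum_comm]
        refine Finset.sum_congr rfl fun l _ => ?_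
        rw [← step1 l, map_sum, map_sum, Matrix.sum_apply]
    _ = (∑ p, ∑ l, ∑ q, σbar (del q (σhat x l j) * σ a q p) l p)
        + ∑ p, ∑ l, σbar (σhat x l j * del p a) l p := by
        rw [← Finset.sum_add_distrib]
        refine Finset.sum_congr rfl fun p _ => ?_
        rw [← Finset.sum_add_distrib]
        refine Finset.sum_congr rfl fun l _ => ?_
        rw [hder, map_add, Matrix.add_apply, map_sum, Matrix.sum_apply]
    _ = delSigma σbar σhat del j x * a + x * ∑ i, σbar (del i a) j i := by
        congr 1
        · -- first term
          calc (∑ p, ∑ l, ∑ q, σbar (del q (σhat x l j) * σ a q p) l p)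
              = ∑ l, ∑ q, ∑ m, σbar (del q (σhat x l j)) l m
                  * ∑ p, σbar (σ a q p) m p := by
                rw [Finset.sum_comm]
                refine Finset.sum_congr rfl fun l _ => ?_
                rw [Finset.sum_comm]
                refine Finset.sum_congr rfl fun q _ => ?_
                simp only [map_mul, Matrix.mul_apply, Finset.mul_sum]
                rw [Finset.sum_comm]
            _ = ∑ l, ∑ q, σbar (del q (σhat x l j)) l q * a := by
                refine Finset.sum_congr rfl fun l _ => Finset.sum_congr rfl fun q _ => ?_
                simp only [h1, mul_ite, mul_zero]
                simp
            _ = delSigma σbar σhat del j x * a := by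
                rw [delSigma, Finset.sum_mul, Finset.sum_comm]
                refine Finset.sum_congr rfl fun l _ => ?_
                rw [Finset.sum_mul]
        · -- second term
          calc (∑ p, ∑ l, σbar (σhat x l j * del p a) l p)
              = ∑ p, ∑ m, (∑ l, σbar (σhat x l j) l m) * σbar (del p a) m p := by
                refine Finset.sum_congr rfl fun p _ => ?_
                simp only [map_mul, Matrix.mul_apply, Finset.sum_mul]
                exact Finset.sum_comm
            _ = ∑ p, x * σbar (del p a) j p := by
                refine Finset.sum_congr rfl fun p _ => ?_
                simp only [h4, ite_mul, zero_mul]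
                simp
            _ = x * ∑ i, σbar (del i a) j i := by rw [Finset.mul_sum]

end Aux

/--
**Corollary 3.6.**  Given a free right twisted multi-derivation
`(∂, σ; σ̄, σ̂)` on `A` and any first order differential calculus `(Ω, d)` on `A`
generated as a left `A`-module by `ω₁, …, ω_n` satisfying the relations
`ω_i a = Σ_j σ_ij(a) ω_j`, `a ω_i = Σ_j ω_j σ̄_ji(a)` and `d a = Σ_i ∂_i(a) ω_i`,
the formula `∇(f) = Σ_i ∂_i^σ(f(ω_i))` defines a hom-connection on `A` with
respect to `Ω`.
-/
theorem formula_defines_homConnection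
    (σ σbar σhat : A →ₐ[k] Matrix (Fin n) (Fin n) A)
    (hfree : IsFreePair σ σbar σhat)
    (del : Fin n → (A →ₗ[k] A))
    (hder : ∀ (a b : A) (i : Fin n),
      del i (a * b) = (∑ j, del j a * σ b j i) + a * del i b)
    (d : A →ₗ[k] Ω) (hd : ∀ a b : A, d (a * b) = a • d b + op b • d a)
    (ω : Fin n → Ω)
    (hgen : ∀ x : Ω, ∃ c : Fin n → A, x = ∑ i, c i • ω i)
    (hrel : ∀ (a : A) (i : Fin n), op a • ω i = ∑ j, σ a i j • ω j)
    (hrel' : ∀ (a : A) (i : Fin n), a • ω i = ∑ j, op (σbar a j i) • ω j)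
    (hdrel : ∀ a : A, d a = ∑ i, del i a • ω i) :
    ∃ nabla : (Ω →ₗ[Aᵐᵒᵖ] A) →ₗ[k] A,
      (∀ f : Ω →ₗ[Aᵐᵒᵖ] A,
        nabla f = ∑ i, delSigma σbar σhat del i (f (ω i))) ∧
      (∀ (f : Ω →ₗ[Aᵐᵒᵖ] A) (a : A),
        nabla (f ∘ₗ lmul a) = nabla f * a + f (d a)) := by
  refine ⟨{ toFun := fun f => ∑ i, delSigma σbar σhat del i (f (ω i))
            map_add' := ?_
            map_smul' := ?_ }, fun f => rfl, ?_⟩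
  · intro f g
    simp only [LinearMap.add_apply, ← Finset.sum_add_distrib]
    exact Finset.sum_congr rfl fun i _ => (delSigmaL σbar σhat del i).map_add _ _
  · intro c f
    simp only [LinearMap.smul_apply, RingHom.id_apply, Finset.smul_sum]
    exact Finset.sum_congr rfl fun i _ => (delSigmaL σbar σhat del i).map_smul c _
  · intro f a
    have hfω : ∀ i, f (a • ω i) = ∑ j, f (ω j) * σbar a j i := by
      intro i
      rw [hrel' a i, map_sum]
      exact Finset.sum_congr rfl fun j _ => by rw [map_smul, op_smul_eq_mul]
    have hfd : f (d a) = ∑ j, f (ω j) * ∑ i, σbar (del i a) j i := by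
      rw [hdrel a, map_sum]
      calc ∑ i, f (del i a • ω i)
          = ∑ i, ∑ j, f (ω j) * σbar (del i a) j i := by
            refine Finset.sum_congr rfl fun i _ => ?_
            rw [hrel' (del i a) i, map_sum]
            exact Finset.sum_congr rfl fun j _ => by rw [map_smul, op_smul_eq_mul]
        _ = ∑ j, f (ω j) * ∑ i, σbar (del i a) j i := by
            rw [Finset.sum_comm]
            simp [Finset.mul_sum]
    simp only [LinearMap.coe_mk, AddHom.coe_mk]
    calc ∑ i, delSigma σbar σhat del i ((f ∘ₗ lmul a) (ω i))
        = ∑ i, ∑ j, delSigma σbar σhat del i (f (ω j) * σbar a j i) := by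
          refine Finset.sum_congr rfl fun i _ => ?_
          have : (f ∘ₗ lmul a) (ω i) = f (a • ω i) := rfl
          rw [this, hfω i]
          exact map_sum (delSigmaL σbar σhat del i) _ Finset.univ
      _ = ∑ j, ∑ i, delSigma σbar σhat del i (f (ω j) * σbar a j i) :=
          Finset.sum_comm
      _ = ∑ j, (delSigma σbar σhat del j (f (ω j)) * a
            + f (ω j) * ∑ i, σbar (del i a) j i) :=
          Finset.sum_congr rfl fun j _ => key σ σbar σhat del hfree hder (f (ω j)) a j
      _ = (∑ i, delSigma σbar σhat del i (f (ω i))) * a + f (d a) := by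
          rw [Finset.sum_add_distrib, Finset.sum_mul, hfd]

end Stmt8
end
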